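/- For the monomial damping a(x) = x^{2m} (m ∈ ℕ) with q = 0, and for every N ∈ ℕ, choosing n large enough (n ≥ (2mN+2)/(2m+1)+1 suffices) the rate κ₂(b) = α b^{−(n+1)}/(α+β)^n + Σ_{k=1}^{n−1} b^{−(n+k+1)}α²/(α+β)^{n+1+k} with α = b^{2m}, ν = −1 satisfies κ₂(b) = O(α^{−N}) whenever β ≥ α^{−1/(2m)+ε'} for some ε' > 0; i.e. the pseudomode error decays faster than any prescribed inverse power of |Re λ|. -/

import Mathlib

open Filter

theorem stmt_19 (m : ℕ) (hm : 0 < m) (ε' : ℝ) (hε' : 0 < ε')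
    (β : ℝ → ℝ) (hβpos : ∀ b, 0 < β b)
    (hβ : ∀ᶠ b in atTop, (b : ℝ) ^ (-1 + 2 * (m : ℝ) * ε') ≤ β b) (N : ℕ) :
    ∀ n : ℕ, (2 * (m : ℝ) * N + 2) / (2 * (m : ℝ) + 1) + 1 ≤ n →
      (fun b : ℝ => b ^ (2 * (m : ℝ)) * b ^ (-((n : ℝ) + 1))
            / (b ^ (2 * (m : ℝ)) + β b) ^ n
          + ∑ k ∈ Finset.Icc 1 (n - 1),
              b ^ (-((n : ℝ) + k + 1)) * (b ^ (2 * (m : ℝ))) ^ 2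
                / (b ^ (2 * (m : ℝ)) + β b) ^ (n + 1 + k))
        =O[atTop] fun b : ℝ => (b ^ (2 * (m : ℝ))) ^ (-(N : ℝ)) := by
  intro n hn
  have hD : (0:ℝ) < 2*(m:ℝ)+1 := by positivity
  have hn' : 2*(m:ℝ)*N + 2 ≤ (2*(m:ℝ)+1) * ((n:ℝ) - 1) := by
    have h1 : (2*(m:ℝ)*N + 2) / (2*(m:ℝ)+1) ≤ (n:ℝ) - 1 := by linarith
    have := (div_le_iff₀ hD).mp h1
    linarith
  have hm1 : (1:ℝ) ≤ (m:ℝ) := by exact_mod_cast hm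
  have hn1 : 1 ≤ n := by
    have h0 : (0:ℝ) ≤ (2*(m:ℝ)*N + 2) / (2*(m:ℝ)+1) := by positivity
    have : (1:ℝ) ≤ (n:ℝ) := by linarith
    exact_mod_cast this
  rw [Asymptotics.isBigO_iff]
  refine ⟨n, ?_⟩
  filter_upwards [eventually_ge_atTop 1] with b hb
  have hb0 : (0:ℝ) < b := lt_of_lt_of_le one_pos hb
  set α := b ^ (2 * (m:ℝ)) with hα
  have hα0 : 0 < α := Real.rpow_pos_of_pos hb0 _
  have hαβ : α ≤ α + β b := le_add_of_nonneg_right (hβpos b).le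
  have hαβ0 : 0 < α + β b := lt_of_lt_of_le hα0 hαβ
  -- key single-term bound
  have key : ∀ (j : ℕ) (e : ℝ), e - 2*(m:ℝ)*j ≤ -(2*(m:ℝ)*N) →
      b ^ e / (α + β b) ^ j ≤ b ^ (-(2*(m:ℝ)*N)) := by
    intro j e he
    have h1 : α ^ j ≤ (α + β b) ^ j := pow_le_pow_left₀ hα0.le hαβ j
    have h2 : α ^ j = b ^ (2*(m:ℝ)*j) := by
      rw [hα, ← Real.rpow_natCast (b ^ (2*(m:ℝ))) j, ← Real.rpow_mul hb0.le]
    calc b ^ e / (α + β b) ^ j ≤ b ^ e / α ^ j := by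
          apply div_le_div_of_nonneg_left (Real.rpow_nonneg hb0.le _) (pow_pos hα0 j) h1
      _ = b ^ (e - 2*(m:ℝ)*j) := by rw [h2, ← Real.rpow_sub hb0]
      _ ≤ _ := Real.rpow_le_rpow_of_exponent_le hb he
  set X := b ^ (-(2*(m:ℝ)*N)) with hX
  have hX0 : 0 ≤ X := Real.rpow_nonneg hb0.le _
  -- first term
  have hT1 : α * b ^ (-((n:ℝ)+1)) / (α + β b) ^ n ≤ X := by
    have hmerge : α * b ^ (-((n:ℝ)+1)) = b ^ (2*(m:ℝ) + -((n:ℝ)+1)) := by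
      rw [hα, ← Real.rpow_add hb0]
    rw [hmerge]
    exact key n _ (by nlinarith)
  -- sum terms
  have hTk : ∀ k ∈ Finset.Icc 1 (n-1),
      b ^ (-((n:ℝ)+k+1)) * α ^ 2 / (α + β b) ^ (n+1+k) ≤ X := by
    intro k hk
    have hk1 : (1:ℝ) ≤ (k:ℝ) := by exact_mod_cast (Finset.mem_Icc.mp hk).1
    have hα2 : α ^ 2 = b ^ (2*(m:ℝ)*2) := by
      rw [hα, ← Real.rpow_natCast (b ^ (2*(m:ℝ))) 2, ← Real.rpow_mul hb0.le]
      norm_num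
    have hmerge : b ^ (-((n:ℝ)+k+1)) * α ^ 2 = b ^ (-((n:ℝ)+k+1) + 2*(m:ℝ)*2) := by
      rw [hα2, ← Real.rpow_add hb0]
    rw [hmerge]
    refine key (n+1+k) _ ?_
    push_cast
    nlinarith [mul_nonneg (by linarith : (0:ℝ) ≤ 2*(m:ℝ)) (by linarith : (0:ℝ) ≤ (k:ℝ)-1)]
  have hsum : ∑ k ∈ Finset.Icc 1 (n-1),
      b ^ (-((n:ℝ)+k+1)) * α ^ 2 / (α + β b) ^ (n+1+k) ≤ ((n:ℝ)-1) * X := by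
    calc ∑ k ∈ Finset.Icc 1 (n-1),
        b ^ (-((n:ℝ)+k+1)) * α ^ 2 / (α + β b) ^ (n+1+k)
        ≤ (Finset.Icc 1 (n-1)).card • X := Finset.sum_le_card_nsmul _ _ _ hTk
      _ = ((n-1 : ℕ) : ℝ) * X := by rw [Nat.card_Icc, nsmul_eq_mul]; norm_num
      _ = ((n:ℝ)-1) * X := by rw [Nat.cast_sub hn1]; norm_num
  -- norms
  have hfnn : 0 ≤ α * b ^ (-((n:ℝ)+1)) / (α + β b) ^ n
      + ∑ k ∈ Finset.Icc 1 (n-1),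
        b ^ (-((n:ℝ)+k+1)) * α ^ 2 / (α + β b) ^ (n+1+k) := by
    have h1 : 0 ≤ α * b ^ (-((n:ℝ)+1)) / (α + β b) ^ n := by positivity
    have h2 : 0 ≤ ∑ k ∈ Finset.Icc 1 (n-1),
        b ^ (-((n:ℝ)+k+1)) * α ^ 2 / (α + β b) ^ (n+1+k) :=
      Finset.sum_nonneg fun k _ => by positivity
    linarith
  have hg : α ^ (-(N:ℝ)) = X := by
    rw [hα, ← Real.rpow_mul hb0.le, hX]
    ring_nf
  rw [Real.norm_eq_abs, Real.norm_eq_abs, abs_of_nonneg hfnn,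
    abs_of_nonneg (by rw [hg]; exact hX0)]
  rw [hg]
  calc α * b ^ (-((n:ℝ)+1)) / (α + β b) ^ n
      + ∑ k ∈ Finset.Icc 1 (n-1),
        b ^ (-((n:ℝ)+k+1)) * α ^ 2 / (α + β b) ^ (n+1+k)
      ≤ X + ((n:ℝ)-1) * X := add_le_add hT1 hsum
    _ = (n:ℝ) * X := by ring
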